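/- Let X be a compact metric space and let T : X → X be a nonexpansive operator such that lim_{j→∞} Tʲ(y⁰) exists for every y⁰ ∈ X. Let ε > 0. Then there exists a natural number k₀ such that for each x ∈ X and each integer k ≥ k₀, ρ(Tᵏ(x), lim_{i→∞} Tⁱ(x)) ≤ ε. In other words, the powers Tᵏ converge uniformly on X to their pointwise limits. -/
import Mathlib

lemma iter_nonexp {X : Type*} [MetricSpace X] (T : X → X)
    (hT : ∀ x y : X, dist (T x) (T y) ≤ dist x y) (k : ℕ) (x y : X) :
    dist (T^[k] x) (T^[k] y) ≤ dist x y := by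
  induction k with
  | zero => simp
  | succ n ih =>
    rw [Function.iterate_succ_apply', Function.iterate_succ_apply']
    exact (hT _ _).trans ih

/-- Let `X` be a compact metric space and `T : X → X` a nonexpansive operator whose
iterates converge pointwise. For every `ε > 0` there is `k₀ ∈ ℕ` such that for each
`x ∈ X` and each `k ≥ k₀`, `dist (T^[k] x) (lim_{i→∞} T^[i] x) ≤ ε`: the powers of `T`
converge uniformly on `X` to their pointwise limits. -/
theorem iterates_uniformly_close_to_limit
    {X : Type*} [MetricSpace X] [CompactSpace X] (T : X → X)
    (hT : ∀ x y : X, dist (T x) (T y) ≤ dist x y)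
    (hconv : ∀ y₀ : X, ∃ z : X,
      Filter.Tendsto (fun j : ℕ => T^[j] y₀) Filter.atTop (nhds z))
    (ε : ℝ) (hε : 0 < ε) :
    ∃ k₀ : ℕ, ∀ x z : X,
      Filter.Tendsto (fun i : ℕ => T^[i] x) Filter.atTop (nhds z) →
      ∀ k ≥ k₀, dist (T^[k] x) z ≤ ε := by
  obtain ⟨t, -, htfin, htcov⟩ :=
    finite_cover_balls_of_compact (isCompact_univ (X := X)) (by positivity : (0:ℝ) < ε/3)
  -- for each center c ∈ t choose its limit and a rank
  choose zc hzc using hconv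
  have hN : ∀ c : X, ∃ N : ℕ, ∀ k ≥ N, dist (T^[k] c) (zc c) ≤ ε/3 := by
    intro c
    have := (Metric.tendsto_atTop.1 (hzc c)) (ε/3) (by positivity)
    obtain ⟨N, hNc⟩ := this
    exact ⟨N, fun k hk => (hNc k hk).le⟩
  choose N hNspec using hN
  haveI := htfin.fintype
  obtain ⟨k₀, hk₀⟩ : ∃ k₀ : ℕ, ∀ c ∈ t, N c ≤ k₀ := by
    rcases t.eq_empty_or_nonempty with rfl | hne
    · exact ⟨0, fun c hc => absurd hc (by simp)⟩
    · obtain ⟨k₀, hk₀⟩ := (htfin.image N).bddAbove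
      exact ⟨k₀, fun c hc => hk₀ ⟨c, hc, rfl⟩⟩
  refine ⟨k₀, fun x z hx k hk => ?_⟩
  obtain ⟨c, hct, hxc⟩ : ∃ c ∈ t, x ∈ Metric.ball c (ε/3) := by
    have := htcov (Set.mem_univ x); simpa using this
  have hxc' : dist x c ≤ ε/3 := (Metric.mem_ball.1 hxc).le
  -- limit map is nonexpansive
  have hz : z = zc x := by
    exact tendsto_nhds_unique hx (hzc x)
  have hzz : dist (zc x) (zc c) ≤ ε/3 := by
    have hd : Filter.Tendsto (fun j : ℕ => dist (T^[j] x) (T^[j] c)) Filter.atTop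
        (nhds (dist (zc x) (zc c))) := (hzc x).dist (hzc c)
    refine le_of_tendsto hd (Filter.Eventually.of_forall fun j => ?_)
    exact (iter_nonexp T hT j x c).trans hxc'
  calc dist (T^[k] x) z
      ≤ dist (T^[k] x) (T^[k] c) + dist (T^[k] c) (zc c) + dist (zc c) z := by
        exact dist_triangle4 _ _ _ _
    _ ≤ ε/3 + ε/3 + ε/3 := by
        gcongr
        · exact (iter_nonexp T hT k x c).trans hxc'
        · exact hNspec c k (le_trans (hk₀ c hct) hk)
        · rw [hz, dist_comm]; exact hzz
    _ = ε := by ring
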